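/- arXiv:2506.23217 — 3 statements merged into one kernel-verified Lean document; each statement's English description precedes it below -/
import Mathlib

section
/- If in addition to the exponential bound ‖Φ(t,s)‖ ≤ K α^{t−s} the derivative satisfies ‖D₂F(t,x)‖ ≤ M₁ for all t, x, then the derivative D₃φ(s,t,η) of the general solution with respect to the initial value satisfies ‖D₃φ(s,t,η)‖ ≤ K·(α + K·M₁)^{t−s} for all s ≤ t and η ∈ X. -/
private lemma clm_comp_sum {X : Type*} [NormedAddCommGroup X] [NormedSpace ℝ X]
    (A : X →L[ℝ] X) {ι : Type*} (s : Finset ι) (f : ι → X →L[ℝ] X) :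
    A.comp (∑ i ∈ s, f i) = ∑ i ∈ s, A.comp (f i) := by
  ext x
  simp

/-- Bound on the derivative of the general solution with respect to
the initial value, via the variational equation. -/
theorem derivative_of_solution_bound
    {X : Type*} [NormedAddCommGroup X] [NormedSpace ℝ X]
    (A : ℤ → X →L[ℝ] X) (F : ℤ → X → X) (DF : ℤ → X → X →L[ℝ] X)
    (hDF : ∀ t x, HasFDerivAt (F t) (DF t x) x)
    (M₁ : ℝ) (hM₁ : 0 ≤ M₁) (hDFbound : ∀ t x, ‖DF t x‖ ≤ M₁)
    (Φ : ℤ → ℤ → X →L[ℝ] X)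
    (hΦdiag : ∀ t, Φ t t = ContinuousLinearMap.id ℝ X)
    (hΦrec : ∀ t s : ℤ, s ≤ t → Φ (t + 1) s = (A t).comp (Φ t s))
    (K α : ℝ) (hK : 1 ≤ K) (hα0 : 0 < α) (hα1 : α < 1)
    (hΦ : ∀ s t : ℤ, s ≤ t → ‖Φ t s‖ ≤ K * α ^ (t - s).toNat)
    (φ : ℤ → ℤ → X → X)
    (hinit : ∀ s (η : X), φ s s η = η)
    (hsol : ∀ s t (η : X), s ≤ t → φ s (t + 1) η = A t (φ s t η) + F t (φ s t η))
    (Dφ : ℤ → ℤ → X → X →L[ℝ] X)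
    (hDinit : ∀ s (η : X), Dφ s s η = ContinuousLinearMap.id ℝ X)
    (hDsol : ∀ s t (η : X), s ≤ t →
      Dφ s (t + 1) η = (A t + DF t (φ s t η)).comp (Dφ s t η)) :
    ∀ s t : ℤ, s ≤ t → ∀ η : X,
      ‖Dφ s t η‖ ≤ K * (α + K * M₁) ^ (t - s).toNat := by
  intro s t hst η
  set β : ℝ := α + K * M₁ with hβdef
  have hβα : α ≤ β := by nlinarith
  have hβ0 : (0:ℝ) < β := lt_of_lt_of_le hα0 hβα
  -- Step 1: variation of constants representation
  have hrep : ∀ n : ℕ, Dφ s (s + n) η =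
      Φ (s + n) s + ∑ i ∈ Finset.range n,
        (Φ (s + n) (s + i + 1)).comp
          ((DF (s + i) (φ s (s + i) η)).comp (Dφ s (s + i) η)) := by
    intro n
    induction n with
    | zero => simp [hDinit, hΦdiag]
    | succ n ih =>
        have hcast : (s + (↑(n + 1) : ℤ)) = (s + n) + 1 := by push_cast; ring
        rw [hcast, hDsol s (s + n) η (by omega), ContinuousLinearMap.add_comp]
        nth_rewrite 1 [ih]
        rw [ContinuousLinearMap.comp_add, clm_comp_sum, Finset.sum_range_succ]
        rw [hΦrec (s + n) s (by omega)]
        have hlast : Φ ((s + n) + 1) (s + (n:ℤ) + 1) = ContinuousLinearMap.id ℝ X := by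
          rw [show (s + (n:ℤ) + 1) = (s + n) + 1 by ring]; exact hΦdiag _
        rw [hlast, ContinuousLinearMap.id_comp, add_assoc]
        congr 1
        congr 1
        refine Finset.sum_congr rfl fun i hi => ?_
        rw [Finset.mem_range] at hi
        rw [← ContinuousLinearMap.comp_assoc, ← hΦrec (s + n) (s + i + 1) (by omega)]
    -- end of hrep
  -- Step 2: Gronwall-type bound by strong induction
  have hbound : ∀ n : ℕ, ‖Dφ s (s + n) η‖ ≤ K * β ^ n := by
    intro n
    induction n using Nat.strong_induction_on with
    | _ n ih =>
      have h1 : ‖Dφ s (s + n) η‖ ≤ ‖Φ (s + n) s‖ + ∑ i ∈ Finset.range n,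
          ‖(Φ (s + n) (s + i + 1)).comp
            ((DF (s + i) (φ s (s + i) η)).comp (Dφ s (s + i) η))‖ := by
        rw [hrep n]
        exact le_trans (norm_add_le _ _) (add_le_add le_rfl (norm_sum_le _ _))
      have hΦn : ‖Φ (s + n) s‖ ≤ K * α ^ n := by
        have := hΦ s (s + n) (by omega)
        rwa [show ((s + (n:ℤ)) - s).toNat = n by omega] at this
      have hterm : ∀ i ∈ Finset.range n,
          ‖(Φ (s + n) (s + i + 1)).comp
            ((DF (s + i) (φ s (s + i) η)).comp (Dφ s (s + i) η))‖ ≤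
          (K * K * M₁) * (β ^ i * α ^ (n - 1 - i)) := by
        intro i hi
        rw [Finset.mem_range] at hi
        have hΦi : ‖Φ (s + n) (s + i + 1)‖ ≤ K * α ^ (n - 1 - i) := by
          have := hΦ (s + i + 1) (s + n) (by omega)
          rwa [show ((s + (n:ℤ)) - (s + i + 1)).toNat = n - 1 - i by omega] at this
        have hG : ‖Dφ s (s + i) η‖ ≤ K * β ^ i := ih i hi
        calc ‖(Φ (s + n) (s + i + 1)).comp
              ((DF (s + i) (φ s (s + i) η)).comp (Dφ s (s + i) η))‖
            ≤ ‖Φ (s + n) (s + i + 1)‖ *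
              (‖DF (s + i) (φ s (s + i) η)‖ * ‖Dφ s (s + i) η‖) :=
              le_trans (ContinuousLinearMap.opNorm_comp_le _ _)
                (mul_le_mul_of_nonneg_left (ContinuousLinearMap.opNorm_comp_le _ _)
                  (norm_nonneg _))
          _ ≤ (K * α ^ (n - 1 - i)) * (M₁ * (K * β ^ i)) := by
              have h2 : ‖DF (s + i) (φ s (s + i) η)‖ * ‖Dφ s (s + i) η‖ ≤
                  M₁ * (K * β ^ i) :=
                mul_le_mul (hDFbound _ _) hG (norm_nonneg _) hM₁
              exact mul_le_mul hΦi h2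
                (mul_nonneg (norm_nonneg _) (norm_nonneg _))
                (by positivity)
          _ = (K * K * M₁) * (β ^ i * α ^ (n - 1 - i)) := by ring
      have hsum : ∑ i ∈ Finset.range n,
          ‖(Φ (s + n) (s + i + 1)).comp
            ((DF (s + i) (φ s (s + i) η)).comp (Dφ s (s + i) η))‖ ≤
          (K * K * M₁) * ∑ i ∈ Finset.range n, β ^ i * α ^ (n - 1 - i) := by
        rw [Finset.mul_sum]
        exact Finset.sum_le_sum hterm
      set S : ℝ := ∑ i ∈ Finset.range n, β ^ i * α ^ (n - 1 - i) with hS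
      have hgeom : S * (β - α) = β ^ n - α ^ n := geom_sum₂_mul β α n
      have hβα' : β - α = K * M₁ := by rw [hβdef]; ring
      have hKKS : (K * K * M₁) * S = K * (β ^ n - α ^ n) := by
        rw [← hgeom, hβα']; ring
      calc ‖Dφ s (s + n) η‖
          ≤ K * α ^ n + (K * K * M₁) * S := by
            exact le_trans h1 (add_le_add hΦn hsum)
        _ = K * β ^ n := by rw [hKKS]; ring
  -- conclude
  have ht : t = s + ((t - s).toNat : ℤ) := by omega
  rw [ht] at *
  have := hbound (t - s).toNat
  rwa [show ((s + ((t-s).toNat:ℤ)) - s).toNat = (t-s).toNat by omega]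
end

section
/- If T : X → X is a bounded linear operator on a Banach space with ‖T − I‖ < 1, and G : X → X is a C^m map with DG(x) invertible for every x, which is also a proper map (preimages of compact sets are compact), then G is a C^m diffeomorphism of X onto itself. -/
open Set Filter Topology Metric

section HadamardAux

set_option linter.unusedSectionVars false
variable {X : Type*} [NormedAddCommGroup X] [NormedSpace ℝ X] [CompleteSpace X]

lemma hadamard_glue_cont {p q : ℝ → X} {t₀ c : ℝ}
    (hp : ContinuousOn p (Icc 0 t₀)) (hq : ContinuousOn q (Icc t₀ c))
    (hpq : p t₀ = q t₀) :
    ContinuousOn (fun t => if t ≤ t₀ then p t else q t) (Icc 0 c) := by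
  intro x hx
  have hsub : Icc (0:ℝ) c ⊆ Icc 0 t₀ ∪ Icc t₀ c := by
    intro y hy; rcases le_total y t₀ with h | h
    · exact Or.inl ⟨hy.1, h⟩
    · exact Or.inr ⟨h, hy.2⟩
  have h1 : ContinuousWithinAt (fun t => if t ≤ t₀ then p t else q t) (Icc 0 t₀) x := by
    by_cases hxm : x ∈ Icc (0:ℝ) t₀
    · exact (hp x hxm).congr (fun y hy => if_pos hy.2) (if_pos hxm.2)
    · exact continuousWithinAt_of_notMem_closure (by rwa [isClosed_Icc.closure_eq])
  have h2 : ContinuousWithinAt (fun t => if t ≤ t₀ then p t else q t) (Icc t₀ c) x := by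
    by_cases hxm : x ∈ Icc t₀ c
    · refine (hq x hxm).congr (fun y hy => ?_) ?_
      · by_cases h : y ≤ t₀
        · have : y = t₀ := le_antisymm h hy.1
          simp [this, hpq]
        · simp [h]
      · by_cases h : x ≤ t₀
        · have : x = t₀ := le_antisymm h hxm.1
          simp [this, hpq]
        · simp [h]
    · exact continuousWithinAt_of_notMem_closure (by rwa [isClosed_Icc.closure_eq])
  exact (h1.union h2).mono hsub

lemma hadamard_glue {G : X → X} {e : OpenPartialHomeomorph X X} (he : ⇑e = G)
    {γ : ℝ → X} (hγ : Continuous γ) {x₀ : X} {t₀ c : ℝ} (ht₀ : 0 ≤ t₀) (htc : t₀ ≤ c)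
    (hγe : ∀ t ∈ Icc t₀ c, γ t ∈ e.target)
    {p : ℝ → X} (hp : ContinuousOn p (Icc 0 t₀)) (hp0 : p 0 = x₀)
    (hpl : ∀ t ∈ Icc 0 t₀, G (p t) = γ t) (hps : p t₀ ∈ e.source) :
    ∃ q : ℝ → X, ContinuousOn q (Icc 0 c) ∧ q 0 = x₀ ∧ (∀ t ∈ Icc 0 c, G (q t) = γ t) ∧
      q c = e.symm (γ c) := by
  have hkey : e.symm (γ t₀) = p t₀ := by
    have h1 : e (p t₀) = γ t₀ := by rw [he]; exact hpl t₀ ⟨ht₀, le_rfl⟩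
    rw [← h1]; exact e.left_inv hps
  have hrinv : ∀ t ∈ Icc t₀ c, G (e.symm (γ t)) = γ t := fun t ht => by
    rw [← he]; exact e.right_inv (hγe t ht)
  have hqcont : ContinuousOn (fun t => e.symm (γ t)) (Icc t₀ c) :=
    e.continuousOn_symm.comp hγ.continuousOn (fun t ht => hγe t ht)
  refine ⟨fun t => if t ≤ t₀ then p t else e.symm (γ t), hadamard_glue_cont hp hqcont hkey.symm,
    by simp [ht₀, hp0], fun t ht => ?_, ?_⟩
  · by_cases h : t ≤ t₀
    · simpa [h] using hpl t ⟨ht.1, h⟩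
    · push_neg at h
      simpa [not_le.2 h] using hrinv t ⟨h.le, ht.2⟩
  · by_cases h : c ≤ t₀
    · have hct : c = t₀ := le_antisymm h htc
      simp [hct, hkey.symm]
    · simp [h]

lemma hadamard_lift {G : X → X} (hGc : Continuous G)
    (chart : X → OpenPartialHomeomorph X X)
    (hchart : ∀ x, ⇑(chart x) = G ∧ x ∈ (chart x).source)
    (hproper : ∀ C : Set X, IsCompact C → IsCompact (G ⁻¹' C))
    {γ : ℝ → X} (hγ : Continuous γ) {x₀ : X} (h0 : G x₀ = γ 0) :
    ∃ p : ℝ → X, ContinuousOn p (Icc 0 1) ∧ p 0 = x₀ ∧ ∀ t ∈ Icc 0 1, G (p t) = γ t := by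
  set S : Set ℝ := {t | t ∈ Icc (0:ℝ) 1 ∧ ∃ p : ℝ → X, ContinuousOn p (Icc 0 t) ∧ p 0 = x₀ ∧
    ∀ s ∈ Icc 0 t, G (p s) = γ s} with hS
  have hS0 : (0:ℝ) ∈ S := by
    refine ⟨⟨le_rfl, zero_le_one⟩, fun _ => x₀, continuousOn_const, rfl, fun s hs => ?_⟩
    have : s = 0 := le_antisymm hs.2 hs.1
    rw [this, h0]
  have hbdd : BddAbove S := ⟨1, fun t ht => ht.1.2⟩
  set a := sSup S with ha
  have ha0 : 0 ≤ a := le_csSup hbdd hS0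
  have ha1 : a ≤ 1 := csSup_le ⟨0, hS0⟩ fun t ht => ht.1.2
  -- key extension step
  have hext : ∀ t₀ ∈ S, ∀ x₁ : X, ∀ c : ℝ, t₀ ≤ c →
      (∀ t ∈ Icc t₀ c, γ t ∈ (chart x₁).target) →
      (∀ p : ℝ → X, ContinuousOn p (Icc 0 t₀) → p 0 = x₀ → (∀ s ∈ Icc 0 t₀, G (p s) = γ s) →
        p t₀ ∈ (chart x₁).source →
        (c ∈ Icc (0:ℝ) 1 → c ∈ S)) := by
    intro t₀ ht₀S x₁ c htc hγe p hpc hp0 hpl hps hc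
    obtain ⟨q, hq1, hq2, hq3, -⟩ :=
      hadamard_glue (hchart x₁).1 hγ ht₀S.1.1 htc hγe hpc hp0 hpl hps
    exact ⟨hc, q, hq1, hq2, hq3⟩
  have haS : a ∈ S := by
    obtain ⟨u, hmono, hulim, huS⟩ := exists_seq_tendsto_sSup ⟨0, hS0⟩ hbdd
    choose pl hplc hpl0 hpll using fun n => (huS n).2
    have hK : IsCompact (G ⁻¹' (γ '' Icc 0 1)) := hproper _ (isCompact_Icc.image hγ)
    have hxK : ∀ n, pl n (u n) ∈ G ⁻¹' (γ '' Icc 0 1) := fun n => by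
      have := hpll n (u n) ⟨(huS n).1.1, le_rfl⟩
      exact mem_preimage.2 ⟨u n, (huS n).1, this.symm⟩
    obtain ⟨xs, hxsK, φ, hφ, hlim⟩ := hK.isSeqCompact hxK
    have hGxs : G xs = γ a := by
      refine tendsto_nhds_unique ((hGc.tendsto xs).comp hlim) ?_
      have h1 : Tendsto (fun n => u (φ n)) atTop (𝓝 a) := hulim.comp hφ.tendsto_atTop
      have h2 : ∀ n, γ (u (φ n)) = G (pl (φ n) (u (φ n))) := fun n =>
        (hpll (φ n) (u (φ n)) ⟨(huS (φ n)).1.1, le_rfl⟩).symm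
      exact Tendsto.congr h2 ((hγ.tendsto a).comp h1)
    set e := chart xs with he
    have htar : γ a ∈ e.target := by
      rw [← hGxs, ← (hchart xs).1]; exact e.map_source (hchart xs).2
    obtain ⟨δ, hδ0, hδ⟩ := Metric.isOpen_iff.1 (e.open_target.preimage hγ) a htar
    have hev1 : ∀ᶠ n in atTop, u (φ n) ∈ ball a δ :=
      (hulim.comp hφ.tendsto_atTop).eventually (isOpen_ball.eventually_mem (mem_ball_self hδ0))
    have hev2 : ∀ᶠ n in atTop, pl (φ n) (u (φ n)) ∈ e.source :=
      hlim.eventually (e.open_source.eventually_mem (hchart xs).2)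
    obtain ⟨n, hn1, hn2⟩ := (hev1.and hev2).exists
    have htua : u (φ n) ≤ a := le_csSup hbdd (huS (φ n))
    have hγe : ∀ t ∈ Icc (u (φ n)) a, γ t ∈ e.target := by
      intro t ht
      have : t ∈ ball a δ := by
        rw [mem_ball, Real.dist_eq, abs_sub_lt_iff]
        rw [mem_ball, Real.dist_eq, abs_sub_lt_iff] at hn1
        constructor <;> [linarith [ht.2]; linarith [ht.1, hn1.2]]
      exact hδ this
    exact hext (u (φ n)) (huS (φ n)) xs a htua hγe (pl (φ n)) (hplc (φ n)) (hpl0 (φ n))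
      (hpll (φ n)) hn2 ⟨ha0, ha1⟩
  -- a = 1
  have ha_eq : a = 1 := by
    by_contra hne
    have halt : a < 1 := lt_of_le_of_ne ha1 hne
    obtain ⟨-, p, hpc, hp0, hpl⟩ := id haS
    set e := chart (p a) with he
    have hGpa : G (p a) = γ a := hpl a ⟨ha0, le_rfl⟩
    have htar : γ a ∈ e.target := by
      rw [← hGpa, ← (hchart (p a)).1]; exact e.map_source (hchart (p a)).2
    obtain ⟨δ, hδ0, hδ⟩ := Metric.isOpen_iff.1 (e.open_target.preimage hγ) a htar
    set c := min 1 (a + δ / 2) with hc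
    have hac : a < c := lt_min halt (by linarith)
    have hc1 : c ≤ 1 := min_le_left _ _
    have hγe : ∀ t ∈ Icc a c, γ t ∈ e.target := by
      intro t ht
      have htc2 : t ≤ a + δ / 2 := le_trans ht.2 (min_le_right _ _)
      have : t ∈ ball a δ := by
        rw [mem_ball, Real.dist_eq, abs_sub_lt_iff]
        constructor <;> [linarith; linarith [ht.1]]
      exact hδ this
    have hcS : c ∈ S := hext a haS (p a) c hac.le hγe p hpc hp0 hpl (hchart (p a)).2
      ⟨le_trans ha0 hac.le, hc1⟩
    exact absurd (le_csSup hbdd hcS) (not_le.2 hac)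
  obtain ⟨-, p, hpc, hp0, hpl⟩ := haS
  rw [ha_eq] at hpc hpl
  exact ⟨p, hpc, hp0, hpl⟩
set_option maxHeartbeats 1000000 in
lemma hadamard_endpoint_cont {G : X → X}
    (sep : IsSeparatedMap G) (inj : IsLocallyInjective G)
    (chart : X → OpenPartialHomeomorph X X)
    (hchart : ∀ x, ⇑(chart x) = G ∧ x ∈ (chart x).source)
    {H : ℝ → ℝ → X} (hH : Continuous fun z : ℝ × ℝ => H z.1 z.2)
    {x₀ : X} (hH0 : ∀ u, H u 0 = G x₀)
    {E : ℝ → X}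
    (hE : ∀ u, ∃ p : ℝ → X, ContinuousOn p (Icc 0 1) ∧ p 0 = x₀ ∧
      (∀ t ∈ Icc 0 1, G (p t) = H u t) ∧ p 1 = E u) :
    Continuous E := by
  rw [continuous_iff_continuousAt]
  intro u
  obtain ⟨p, hpc, hp0, hpl, hp1⟩ := hE u
  -- relatively open cover of [0,1] by chart preimages
  have hV : ∀ t : ℝ, ∃ V : Set ℝ, IsOpen V ∧
      (t ∈ Icc (0:ℝ) 1 → t ∈ V ∧ ∀ s ∈ V ∩ Icc (0:ℝ) 1, p s ∈ (chart (p t)).source) ∧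
      (t ∉ Icc (0:ℝ) 1 → V = ∅) := by
    intro t
    by_cases ht : t ∈ Icc (0:ℝ) 1
    · have hmem : p ⁻¹' (chart (p t)).source ∈ 𝓝[Icc (0:ℝ) 1] t :=
        (hpc t ht) ((chart (p t)).open_source.mem_nhds (hchart (p t)).2)
      rw [mem_nhdsWithin] at hmem
      obtain ⟨V, hVo, htV, hVsub⟩ := hmem
      exact ⟨V, hVo, fun _ => ⟨htV, fun s hs => hVsub ⟨hs.1, hs.2⟩⟩, fun h => absurd ht h⟩
    · exact ⟨∅, isOpen_empty, fun h => absurd h ht, fun _ => rfl⟩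
  choose V hVo hVmem hVemp using hV
  obtain ⟨δ, hδ0, hδ⟩ := lebesgue_number_lemma_of_metric (isCompact_Icc (a := (0:ℝ)) (b := 1))
    hVo (fun t ht => mem_iUnion.2 ⟨t, (hVmem t ht).1⟩)
  obtain ⟨N, hN⟩ := exists_nat_one_div_lt (K := ℝ) hδ0
  set n : ℕ := N + 1 with hn
  have hnR : (0:ℝ) < n := by positivity
  have hNδ : 1 / (n:ℝ) < δ := by
    rw [hn]; push_cast; convert hN using 2
  set T : ℕ → ℝ := fun i => i / n with hT
  have hT0 : T 0 = 0 := by simp [hT]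
  have hTn : T n = 1 := by rw [hT]; exact div_self hnR.ne'
  have hTmono : ∀ i : ℕ, T i ≤ T (i + 1) := fun i => by
    rw [hT]
    have : (i:ℝ) ≤ (i:ℝ) + 1 := by linarith
    calc (i:ℝ)/n ≤ ((i:ℝ)+1)/n := by apply div_le_div_of_nonneg_right this hnR.le
    _ = ((i+1 : ℕ):ℝ)/n := by push_cast; ring
  have hTIcc : ∀ i : ℕ, i ≤ n → T i ∈ Icc (0:ℝ) 1 := by
    intro i hi
    constructor
    · positivity
    · rw [hT]
      rw [div_le_one hnR]
      exact_mod_cast hi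
  have hTgap : ∀ i : ℕ, ∀ t ∈ Icc (T i) (T (i+1)), dist t (T i) < δ := by
    intro i t ht
    rw [Real.dist_eq, abs_of_nonneg (by linarith [ht.1])]
    have : T (i+1) - T i = 1 / n := by rw [hT]; push_cast; ring
    linarith [ht.2, ht.1]
  -- choose chart indices
  have hτ : ∀ i : ℕ, ∃ τ : ℝ, i < n → (τ ∈ Icc (0:ℝ) 1 ∧ ball (T i) δ ⊆ V τ) := by
    intro i
    by_cases hi : i < n
    · obtain ⟨τ, hτ⟩ := hδ (T i) (hTIcc i hi.le)
      refine ⟨τ, fun _ => ⟨?_, hτ⟩⟩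
      by_contra h
      have : T i ∈ (∅ : Set ℝ) := by rw [← hVemp τ h]; exact hτ (mem_ball_self hδ0)
      exact this
    · exact ⟨0, fun h => absurd h hi⟩
  choose τ hτ using hτ
  set ch : ℕ → OpenPartialHomeomorph X X := fun i => chart (p (τ i)) with hch
  have hsrc : ∀ i : ℕ, i < n → ∀ s ∈ Icc (T i) (T (i + 1)), p s ∈ (ch i).source := by
    intro i hi s hs
    have hsI : s ∈ Icc (0:ℝ) 1 :=
      ⟨le_trans (hTIcc i hi.le).1 hs.1, le_trans hs.2 (hTIcc (i+1) hi).2⟩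
    have : s ∈ V (τ i) := (hτ i hi).2 (by rw [mem_ball]; exact hTgap i s hs)
    exact ((hVmem (τ i) (hτ i hi).1).2) s ⟨this, hsI⟩
  have hHu : ∀ t ∈ Icc (0:ℝ) 1, H u t = G (p t) := fun t ht => (hpl t ht).symm
  have htaru : ∀ i : ℕ, i < n → ∀ t ∈ Icc (T i) (T (i+1)), H u t ∈ (ch i).target := by
    intro i hi t ht
    have hsI : t ∈ Icc (0:ℝ) 1 :=
      ⟨le_trans (hTIcc i hi.le).1 ht.1, le_trans ht.2 (hTIcc (i+1) hi).2⟩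
    rw [hHu t hsI, ← (hchart (p (τ i))).1]
    exact (ch i).map_source (hsrc i hi t ht)
  -- junction values
  set j : ℕ → ℝ → X := fun i u' => if i = 0 then x₀ else (ch (i-1)).symm (H u' (T i)) with hj
  have hju : ∀ i : ℕ, i ≤ n → j i u = p (T i) := by
    intro i hi
    match i with
    | 0 => simp [hj, hT0, hp0]
    | (k+1) =>
      have hk : k < n := hi
      have hs : p (T (k+1)) ∈ (ch k).source := hsrc k hk (T (k+1)) ⟨hTmono k, le_rfl⟩
      have : H u (T (k+1)) = (ch k) (p (T (k+1))) := by
        rw [(hchart (p (τ k))).1]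
        exact hHu (T (k+1)) ⟨(hTIcc (k+1) hk).1, (hTIcc (k+1) hk).2⟩
      simp only [hj, Nat.succ_ne_zero, if_false, Nat.add_sub_cancel]
      rw [this]
      exact (ch k).left_inv hs
  have hjcont : ∀ i : ℕ, 1 ≤ i → i ≤ n → ContinuousAt (j i) u := by
    intro i h1 h2
    obtain ⟨k, rfl⟩ : ∃ k, i = k + 1 := ⟨i - 1, (Nat.succ_pred_eq_of_pos h1).symm⟩
    have hk : k < n := h2
    have hmem : H u (T (k+1)) ∈ (ch k).target :=
      htaru k hk (T (k+1)) ⟨hTmono k, le_rfl⟩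
    have hc1 : ContinuousAt (fun u' => H u' (T (k+1))) u :=
      (hH.comp (continuous_id.prodMk continuous_const)).continuousAt
    have hc2 : ContinuousAt (ch k).symm (H u (T (k+1))) :=
      (ch k).symm.continuousAt (by rwa [OpenPartialHomeomorph.symm_source])
    have : ContinuousAt (fun u' => (ch k).symm (H u' (T (k+1)))) u := ContinuousAt.comp hc2 hc1
    refine this.congr (Eventually.of_forall fun u' => ?_)
    simp [hj]
  -- the eventual conditions
  have hDC : ∀ i ∈ Finset.range n, ∀ᶠ u' in 𝓝 u,
      (∀ t ∈ Icc (T i) (T (i+1)), H u' t ∈ (ch i).target) ∧ j i u' ∈ (ch i).source := by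
    intro i hi
    have hi' : i < n := Finset.mem_range.1 hi
    have hD : ∀ᶠ u' in 𝓝 u, ∀ t ∈ Icc (T i) (T (i+1)), H u' t ∈ (ch i).target := by
      obtain ⟨U, W, hUo, hWo, hUs, hWs, hUW⟩ := generalized_tube_lemma isCompact_singleton
        (isCompact_Icc (a := T i) (b := T (i+1))) ((ch i).open_target.preimage hH)
        (fun z hz => by
          obtain ⟨hz1, hz2⟩ := mem_prod.1 hz
          rw [mem_singleton_iff] at hz1
          exact mem_preimage.2 (hz1 ▸ htaru i hi' z.2 hz2))
      filter_upwards [hUo.mem_nhds (hUs rfl)] with u' hu' t ht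
      exact hUW (mk_mem_prod hu' (hWs ht))
    have hC : ∀ᶠ u' in 𝓝 u, j i u' ∈ (ch i).source := by
      have hjm : j i u ∈ (ch i).source := by
        rw [hju i hi'.le]
        exact hsrc i hi' (T i) ⟨le_rfl, hTmono i⟩
      rcases Nat.eq_zero_or_pos i with h0 | h1
      · subst h0
        exact Eventually.of_forall fun u' => by simpa [hj] using hjm
      · exact (hjcont i h1 hi'.le).eventually_mem ((ch i).open_source.mem_nhds hjm)
    exact hD.and hC
  have hWev := (Filter.eventually_all_finset (Finset.range n)).2 hDC
  -- on this neighborhood, E agrees with j n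
  have hEj : ∀ᶠ u' in 𝓝 u, E u' = j n u' := by
    filter_upwards [hWev] with u' hu'
    have hHu' : Continuous (fun t => H u' t) := hH.comp (continuous_const.prodMk continuous_id)
    have key : ∀ i : ℕ, i ≤ n → ∃ q : ℝ → X, ContinuousOn q (Icc 0 (T i)) ∧ q 0 = x₀ ∧
        (∀ t ∈ Icc 0 (T i), G (q t) = H u' t) ∧ q (T i) = j i u' := by
      intro i hi
      induction i with
      | zero =>
        refine ⟨fun _ => x₀, continuousOn_const, rfl, fun t ht => ?_, by simp [hj]⟩
        rw [hT0] at ht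
        have : t = 0 := le_antisymm ht.2 ht.1
        rw [this, hH0 u']
      | succ k ih =>
        have hk : k < n := hi
        obtain ⟨q, hq1, hq2, hq3, hq4⟩ := ih hk.le
        have hcond := hu' k (Finset.mem_range.2 hk)
        have hps : q (T k) ∈ (ch k).source := by rw [hq4]; exact hcond.2
        obtain ⟨q', hq'1, hq'2, hq'3, hq'4⟩ := hadamard_glue (hchart (p (τ k))).1 hHu'
          (hTIcc k hk.le).1 (hTmono k) hcond.1 hq1 hq2 hq3 hps
        refine ⟨q', hq'1, hq'2, hq'3, ?_⟩
        rw [hq'4]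
        simp [hj, hch]
    obtain ⟨q, hq1, hq2, hq3, hq4⟩ := key n le_rfl
    rw [hTn] at hq1 hq3 hq4
    obtain ⟨p', hp'1, hp'2, hp'3, hp'4⟩ := hE u'
    have heq : Set.EqOn q p' (Icc (0:ℝ) 1) := by
      refine sep.eqOn_of_comp_eqOn inj isPreconnected_Icc hq1 hp'1 (fun t ht => ?_)
        (⟨le_rfl, zero_le_one⟩ : (0:ℝ) ∈ Icc (0:ℝ) 1) (by rw [hq2, hp'2])
      show G (q t) = G (p' t)
      rw [hq3 t ht, hp'3 t ht]
    rw [← hp'4, ← heq ⟨zero_le_one, le_rfl⟩, hq4]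
  exact (hjcont n (by omega) le_rfl).congr (hEj.mono fun u' h => h.symm)

end HadamardAux
/-- A proper `C^m` map with everywhere invertible derivative
is a global `C^m` diffeomorphism (Hadamard), given also a bounded linear
operator `T` with `‖T − I‖ < 1`. -/
theorem global_inverse_function_theorem
    {X : Type*} [NormedAddCommGroup X] [NormedSpace ℝ X] [CompleteSpace X]
    (T : X →L[ℝ] X) (hT : ‖T - ContinuousLinearMap.id ℝ X‖ < 1)
    (m : ℕ) (hm : 1 ≤ m)
    (G : X → X) (hG : ContDiff ℝ m G)
    (DG : X → X ≃L[ℝ] X)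
    (hDG : ∀ x : X, HasFDerivAt G (DG x : X →L[ℝ] X) x)
    (hproper : ∀ C : Set X, IsCompact C → IsCompact (G ⁻¹' C)) :
    ∃ Ginv : X → X,
      Function.LeftInverse Ginv G ∧ Function.RightInverse Ginv G ∧
      ContDiff ℝ m Ginv := by
  have hn : ((m : ℕ) : WithTop ℕ∞) ≠ 0 := by exact_mod_cast (show m ≠ 0 by omega)
  have hstrict : ∀ x : X, HasStrictFDerivAt G (DG x : X →L[ℝ] X) x := fun x =>
    hG.contDiffAt.hasStrictFDerivAt' (hDG x) hn
  set chart : X → OpenPartialHomeomorph X X := fun x => (hstrict x).toOpenPartialHomeomorph G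
    with hchartdef
  have hchart : ∀ x, ⇑(chart x) = G ∧ x ∈ (chart x).source := fun x =>
    ⟨(hstrict x).toOpenPartialHomeomorph_coe, (hstrict x).mem_toOpenPartialHomeomorph_source⟩
  have hGc : Continuous G := hG.continuous
  have sep : IsSeparatedMap G := T2Space.isSeparatedMap G
  have inj : IsLocallyInjective G := fun x =>
    ⟨(chart x).source, (chart x).open_source, (hchart x).2, by
      have := (chart x).injOn
      rwa [(hchart x).1] at this⟩
  set y₀ : X := G 0 with hy₀
  set seg : X → ℝ → X := fun y t => y₀ + t • (y - y₀) with hseg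
  have hseg0 : ∀ y, seg y 0 = y₀ := fun y => by simp [hseg]
  have hseg1 : ∀ y, seg y 1 = y := fun y => by simp [hseg]
  have hsegc : ∀ y, Continuous (seg y) := fun y =>
    continuous_const.add (continuous_id.smul continuous_const)
  have hlift : ∀ y : X, ∃ p : ℝ → X, ContinuousOn p (Set.Icc 0 1) ∧ p 0 = 0 ∧
      ∀ t ∈ Set.Icc (0:ℝ) 1, G (p t) = seg y t :=
    fun y => hadamard_lift hGc chart hchart hproper (hsegc y) (by rw [hseg0])
  choose L hL1 hL2 hL3 using hlift
  set Ginv : X → X := fun y => L y 1 with hGinvdef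
  have hright : ∀ y, G (Ginv y) = y := fun y => by
    have := hL3 y 1 ⟨zero_le_one, le_rfl⟩
    rw [hseg1] at this
    exact this
  have hGinv0 : Ginv y₀ = 0 := by
    have hconst : ∀ t ∈ Set.Icc (0:ℝ) 1, (G ∘ L y₀) t = (G ∘ (fun _ => (0:X))) t := by
      intro t ht
      show G (L y₀ t) = G 0
      rw [hL3 y₀ t ht]
      simp [hseg, hy₀]
    have := sep.eqOn_of_comp_eqOn inj isPreconnected_Icc (hL1 y₀) continuousOn_const
      hconst (⟨le_rfl, zero_le_one⟩ : (0:ℝ) ∈ Set.Icc (0:ℝ) 1) (hL2 y₀)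
    exact this ⟨zero_le_one, le_rfl⟩
  have hleft : ∀ a : X, Ginv (G a) = a := by
    intro a
    have hHcont : Continuous fun z : ℝ × ℝ => seg (G (z.1 • a)) z.2 := by
      apply continuous_const.add
      exact continuous_snd.smul
        ((hGc.comp (continuous_fst.smul continuous_const)).sub continuous_const)
    have hEc : Continuous (fun u : ℝ => Ginv (G (u • a))) := by
      refine hadamard_endpoint_cont sep inj chart hchart hHcont (fun u => by rw [hseg0])
        (fun u => ⟨L (G (u • a)), hL1 _, hL2 _, fun t ht => hL3 _ t ht, rfl⟩)
    have hkey : (fun u : ℝ => Ginv (G (u • a))) = fun u : ℝ => u • a := by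
      refine sep.eq_of_comp_eq inj hEc (continuous_id.smul continuous_const) ?_ 0 ?_
      · funext u
        show G (Ginv (G (u • a))) = G (u • a)
        rw [hright]
      · show Ginv (G ((0:ℝ) • a)) = (0:ℝ) • a
        rw [zero_smul (A := X) (M₀ := ℝ), ← hy₀, hGinv0]
    have := congrFun hkey 1
    simpa using this
  have hinj : Function.Injective G := fun a b hab => by
    rw [← hleft a, ← hleft b, hab]
  have hsmooth : ContDiff ℝ m Ginv := by
    rw [contDiff_iff_contDiffAt]
    intro y
    set x := Ginv y with hx
    have hGx : G x = y := hright y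
    have hCD : ContDiffAt ℝ m (hG.contDiffAt.localInverse (hDG x) hn) (G x) :=
      hG.contDiffAt.to_localInverse (hDG x) hn
    have hev : ∀ᶠ y' in 𝓝 (G x), G ((hG.contDiffAt.localInverse (hDG x) hn) y') = y' :=
      HasStrictFDerivAt.eventually_right_inverse (hstrict x)
    have heq : Ginv =ᶠ[𝓝 y] (hG.contDiffAt.localInverse (hDG x) hn) := by
      rw [← hGx]
      filter_upwards [hev] with y' hy'
      exact (hinj (hy'.trans (hright y').symm)).symm
    rw [hGx] at hCD
    exact hCD.congr_of_eventuallyEq heq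
  exact ⟨Ginv, hleft, hright, hsmooth⟩
end

section
/- Global Lipschitz estimate for the inverse conjugacy: under ‖Φ(t,s)‖ ≤ K α^{t−s}, ‖F(t,x) − F(t,x̄)‖ ≤ L‖x−x̄‖, and the solution estimate ‖φ(s,t,η) − φ(s,t,η̄)‖ ≤ K(α + K L)^{t−s}‖η − η̄‖ with α + K L ≤ 1, the map G(t,η) := η − ∑_{s=τ₀}^{t−1} Φ(t,s+1) F(s, φ(s,t,η)) satisfies ‖G(t,η) − G(t,η̄)‖ ≤ (1 + K²L/(1−α))‖η − η̄‖. -/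
lemma icc_geom_sum_le (α : ℝ) (hα0 : 0 ≤ α) (hα1 : α < 1) (τ₀ t : ℤ) :
    ∑ s ∈ Finset.Icc τ₀ (t - 1), α ^ (t - 1 - s).toNat ≤ 1 / (1 - α) := by
  have hre : ∑ s ∈ Finset.Icc τ₀ (t - 1), α ^ (t - 1 - s).toNat
      = ∑ k ∈ Finset.range (t - τ₀).toNat, α ^ k := by
    refine Finset.sum_nbij' (fun s => (t - 1 - s).toNat) (fun k => t - 1 - (k : ℤ))
      ?_ ?_ ?_ ?_ ?_
    · intro s hs; simp only [Finset.mem_Icc] at hs; simp only [Finset.mem_range]; omega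
    · intro k hk; simp only [Finset.mem_range] at hk; simp only [Finset.mem_Icc]; omega
    · intro s hs; simp only [Finset.mem_Icc] at hs; beta_reduce; omega
    · intro k hk; simp only [Finset.mem_range] at hk; beta_reduce; omega
    · intro s hs; rfl
  rw [hre]
  set n := (t - τ₀).toNat
  rw [geom_sum_eq (ne_of_lt hα1) n]
  have h1 : 0 < 1 - α := by linarith
  have h2 : (0:ℝ) ≤ α ^ n := pow_nonneg hα0 n
  have heq : (α ^ n - 1) / (α - 1) = (1 - α ^ n) / (1 - α) := by
    rw [div_eq_div_iff (by linarith) (by linarith)]; ring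
  rw [heq, div_le_div_iff₀ h1 h1]
  nlinarith

/-- global Lipschitz estimate for the inverse conjugacy `G`. -/
theorem inverse_conjugacy_lipschitz
    {X : Type*} [NormedAddCommGroup X] [NormedSpace ℝ X]
    (τ₀ : ℤ) (Φ : ℤ → ℤ → X →L[ℝ] X)
    (K α L : ℝ) (hK : 1 ≤ K) (hα0 : 0 < α) (hα1 : α < 1) (hL : 0 ≤ L)
    (hone : α + K * L ≤ 1)
    (hΦ : ∀ s t : ℤ, τ₀ ≤ s → s ≤ t → ‖Φ t s‖ ≤ K * α ^ (t - s).toNat)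
    (F : ℤ → X → X)
    (hF : ∀ t (x y : X), ‖F t x - F t y‖ ≤ L * ‖x - y‖)
    (φ : ℤ → ℤ → X → X)
    (hφ : ∀ s t : ℤ, s ≤ t → ∀ η η' : X,
      ‖φ s t η - φ s t η'‖ ≤ K * (α + K * L) ^ (t - s).toNat * ‖η - η'‖)
    (G : ℤ → X → X)
    (hG : ∀ t (η : X),
      G t η = η - ∑ s ∈ Finset.Icc τ₀ (t - 1), Φ t (s + 1) (F s (φ s t η))) :
    ∀ t : ℤ, τ₀ ≤ t → ∀ η η' : X,
      ‖G t η - G t η'‖ ≤ (1 + K ^ 2 * L / (1 - α)) * ‖η - η'‖ := by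
  intro t ht η η'
  set d := ‖η - η'‖ with hd
  have hd0 : 0 ≤ d := norm_nonneg _
  rw [hG t η, hG t η']
  have hsplit : (η - ∑ s ∈ Finset.Icc τ₀ (t - 1), Φ t (s + 1) (F s (φ s t η)))
      - (η' - ∑ s ∈ Finset.Icc τ₀ (t - 1), Φ t (s + 1) (F s (φ s t η')))
      = (η - η') - ∑ s ∈ Finset.Icc τ₀ (t - 1),
          (Φ t (s + 1) (F s (φ s t η)) - Φ t (s + 1) (F s (φ s t η'))) := by
    rw [Finset.sum_sub_distrib]; abel
  rw [hsplit]
  have hterm : ∀ s ∈ Finset.Icc τ₀ (t - 1),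
      ‖Φ t (s + 1) (F s (φ s t η)) - Φ t (s + 1) (F s (φ s t η'))‖
        ≤ (K ^ 2 * L * d) * α ^ (t - 1 - s).toNat := by
    intro s hs
    rw [Finset.mem_Icc] at hs
    have hΦs : ‖Φ t (s + 1)‖ ≤ K * α ^ (t - (s + 1)).toNat :=
      hΦ (s + 1) t (by omega) (by omega)
    have hφs : ‖φ s t η - φ s t η'‖ ≤ K * (α + K * L) ^ (t - s).toNat * d :=
      hφ s t (by omega) η η'
    have hFs : ‖F s (φ s t η) - F s (φ s t η')‖
        ≤ L * (K * (α + K * L) ^ (t - s).toNat * d) :=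
      le_trans (hF s _ _) (mul_le_mul_of_nonneg_left hφs hL)
    have hp : (α + K * L) ^ (t - s).toNat ≤ 1 :=
      pow_le_one₀ (by positivity) hone
    rw [← map_sub]
    calc ‖Φ t (s + 1) (F s (φ s t η) - F s (φ s t η'))‖
        ≤ ‖Φ t (s + 1)‖ * ‖F s (φ s t η) - F s (φ s t η')‖ :=
          ContinuousLinearMap.le_opNorm _ _
      _ ≤ (K * α ^ (t - (s + 1)).toNat) * (L * (K * (α + K * L) ^ (t - s).toNat * d)) := by
          apply mul_le_mul hΦs hFs (norm_nonneg _) (by positivity)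
      _ ≤ (K ^ 2 * L * d) * α ^ (t - 1 - s).toNat := by
          have heq : (t - (s + 1)).toNat = (t - 1 - s).toNat := by omega
          rw [heq]
          have hαn : (0:ℝ) ≤ α ^ (t - 1 - s).toNat := by positivity
          nlinarith [mul_nonneg (mul_nonneg (by nlinarith : (0:ℝ) ≤ K * K) hL) hd0,
            mul_nonneg hαn (mul_nonneg (mul_nonneg (by nlinarith : (0:ℝ) ≤ K * K) hL) hd0)]
  have hsum : ‖∑ s ∈ Finset.Icc τ₀ (t - 1),
      (Φ t (s + 1) (F s (φ s t η)) - Φ t (s + 1) (F s (φ s t η')))‖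
        ≤ (K ^ 2 * L * d) * (1 / (1 - α)) := by
    calc ‖∑ s ∈ Finset.Icc τ₀ (t - 1),
        (Φ t (s + 1) (F s (φ s t η)) - Φ t (s + 1) (F s (φ s t η')))‖
        ≤ ∑ s ∈ Finset.Icc τ₀ (t - 1),
          ‖Φ t (s + 1) (F s (φ s t η)) - Φ t (s + 1) (F s (φ s t η'))‖ :=
          norm_sum_le _ _
      _ ≤ ∑ s ∈ Finset.Icc τ₀ (t - 1), (K ^ 2 * L * d) * α ^ (t - 1 - s).toNat :=
          Finset.sum_le_sum hterm
      _ = (K ^ 2 * L * d) * ∑ s ∈ Finset.Icc τ₀ (t - 1), α ^ (t - 1 - s).toNat := by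
          rw [Finset.mul_sum]
      _ ≤ (K ^ 2 * L * d) * (1 / (1 - α)) := by
          apply mul_le_mul_of_nonneg_left (icc_geom_sum_le α (le_of_lt hα0) hα1 τ₀ t)
          positivity
  calc ‖(η - η') - ∑ s ∈ Finset.Icc τ₀ (t - 1),
      (Φ t (s + 1) (F s (φ s t η)) - Φ t (s + 1) (F s (φ s t η')))‖
      ≤ d + (K ^ 2 * L * d) * (1 / (1 - α)) := by
        refine le_trans (norm_sub_le _ _) ?_
        exact add_le_add le_rfl hsum
    _ = (1 + K ^ 2 * L / (1 - α)) * d := by ring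
end
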